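/- Coercivity at infinity of the auxiliary function h (claim proved inside the paper's Lemma 3.2): Let d be a positive integer, M > 0, and g : ℝ^d → ℝ^d a function such that |v − w|² ≤ M (g(v) − g(w))·(v − w) for all v, w ∈ ℝ^d with |v| ≥ 1 and |w| ≥ 1. Then for every v ∈ ℝ^d with |v| ≤ 1 and every e ∈ ℝ^d with |e| = 1, the function h(s) = s e·(g(v + s e) − g(v)) tends to +∞ as s → ∞. -/

import Mathlib

open scoped RealInnerProductSpace

/-- Coercivity at infinity of the auxiliary function `h` (from the proof of the
paper's Lemma 3.2). -/
theorem auxiliary_h_tendsto_atTop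
    (d : ℕ) (hd : 0 < d)
    (M : ℝ) (hM : 0 < M)
    (g : EuclideanSpace ℝ (Fin d) → EuclideanSpace ℝ (Fin d))
    (hg_linear : ∀ v w : EuclideanSpace ℝ (Fin d), 1 ≤ ‖v‖ → 1 ≤ ‖w‖ →
      ‖v - w‖ ^ 2 ≤ M * ⟪g v - g w, v - w⟫)
    (v e : EuclideanSpace ℝ (Fin d)) (hv : ‖v‖ ≤ 1) (he : ‖e‖ = 1) :
    Filter.Tendsto (fun s : ℝ => s * ⟪e, g (v + s • e) - g v⟫)
      Filter.atTop Filter.atTop := by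
  set w : EuclideanSpace ℝ (Fin d) := v + (2:ℝ) • e with hw_def
  have hnorm : ∀ s : ℝ, 2 ≤ s → 1 ≤ ‖v + s • e‖ := by
    intro s hs
    have h1 : ‖s • e‖ - ‖-v‖ ≤ ‖s • e - (-v)‖ := norm_sub_norm_le _ _
    have h2 : ‖s • e‖ = s := by
      rw [norm_smul, he]; simp [abs_of_nonneg (by linarith : (0:ℝ) ≤ s)]
    have h3 : s • e - (-v) = v + s • e := by abel
    rw [h2, h3, norm_neg] at h1
    linarith
  have hw : (1:ℝ) ≤ ‖w‖ := hnorm 2 le_rfl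
  set c : ℝ := ⟪e, g w - g v⟫ with hc_def
  have key : ∀ s : ℝ, 3 ≤ s →
      s * ((s - 2) / M + c) ≤ s * ⟪e, g (v + s • e) - g v⟫ := by
    intro s hs
    set u : EuclideanSpace ℝ (Fin d) := v + s • e with hu_def
    have hu : 1 ≤ ‖u‖ := hnorm s (by linarith)
    have h1 := hg_linear u w hu hw
    have huw : u - w = (s - 2) • e := by
      rw [hu_def, hw_def, sub_smul]; abel
    rw [huw, inner_smul_right, norm_smul, he, mul_one, Real.norm_eq_abs,
      sq_abs] at h1
    have hs2 : (0:ℝ) < s - 2 := by linarith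
    have h2 : (s - 2) / M ≤ ⟪g u - g w, e⟫ := by
      rw [div_le_iff₀ hM]
      nlinarith
    have h3 : ⟪e, g u - g v⟫ = ⟪g u - g w, e⟫ + c := by
      simp only [hc_def, inner_sub_left, inner_sub_right,
        real_inner_comm e (g u), real_inner_comm e (g v),
        real_inner_comm e (g w)]
      ring
    have h4 : (s - 2) / M + c ≤ ⟪e, g u - g v⟫ := by rw [h3]; linarith
    exact mul_le_mul_of_nonneg_left h4 (by linarith)
  have hlow : Filter.Tendsto (fun s : ℝ => s * ((s - 2) / M + c))
      Filter.atTop Filter.atTop := by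
    apply Filter.Tendsto.atTop_mul_atTop₀ Filter.tendsto_id
    apply Filter.tendsto_atTop_add_const_right
    exact Filter.Tendsto.atTop_div_const hM
      (Filter.tendsto_atTop_add_const_right _ (-2) Filter.tendsto_id)
  exact Filter.tendsto_atTop_mono'
    Filter.atTop ((Filter.eventually_ge_atTop 3).mono key) hlow
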